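/- arXiv:1111.5480 — 5 statements merged into one kernel-verified Lean document; each statement's English description precedes it below -/
import Mathlib

section
/- Let U ⊆ ℝ² be open and let u : ℝ² → ℝ be C² on U with u_y ≠ 0 at every point of U. Suppose u satisfies the flux equation u_y²·u_xx − 2·u_x·u_y·u_xy + u_x²·u_yy = 0 on U. Then the function w = u_x/u_y is differentiable on U and satisfies the gas dynamics equation w_x = w·w_y at every point of U. -/
/-- Partial derivative of `u : ℝ × ℝ → ℝ` in the first coordinate direction. -/
noncomputable def pdx (u : ℝ × ℝ → ℝ) (p : ℝ × ℝ) : ℝ := fderiv ℝ u p (1, 0)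

/-- Partial derivative of `u : ℝ × ℝ → ℝ` in the second coordinate direction. -/
noncomputable def pdy (u : ℝ × ℝ → ℝ) (p : ℝ × ℝ) : ℝ := fderiv ℝ u p (0, 1)

/-- Derivative of a directional derivative of a C² function. -/
lemma hasFDerivAt_pd (u : ℝ × ℝ → ℝ) (p : ℝ × ℝ) (h : ContDiffAt ℝ 2 u p) (v : ℝ × ℝ) :
    HasFDerivAt (fun q => fderiv ℝ u q v)
      ((ContinuousLinearMap.apply ℝ ℝ v).comp (fderiv ℝ (fderiv ℝ u) p)) p := by
  have h1 : ContDiffAt ℝ 1 (fderiv ℝ u) p := h.fderiv_right (by norm_num)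
  exact (ContinuousLinearMap.apply ℝ ℝ v).hasFDerivAt.comp p
    (h1.differentiableAt one_ne_zero).hasFDerivAt

/-- if `u` is C² on an open set `U ⊆ ℝ²`, `u_y ≠ 0` on `U`, and `u`
satisfies the flux equation `u_y²·u_xx − 2·u_x·u_y·u_xy + u_x²·u_yy = 0` on `U`,
then `w = u_x/u_y` is differentiable on `U` and satisfies the gas dynamics
equation `w_x = w·w_y` on `U`. -/
theorem flux_to_gas_dynamics (U : Set (ℝ × ℝ)) (hU : IsOpen U) (u : ℝ × ℝ → ℝ)
    (hu : ContDiffOn ℝ 2 u U)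
    (huy : ∀ p ∈ U, pdy u p ≠ 0)
    (hflux : ∀ p ∈ U,
      (pdy u p) ^ 2 * pdx (pdx u) p
        - 2 * pdx u p * pdy u p * pdy (pdx u) p
        + (pdx u p) ^ 2 * pdy (pdy u) p = 0) :
    DifferentiableOn ℝ (fun p => pdx u p / pdy u p) U ∧
    ∀ p ∈ U,
      pdx (fun q => pdx u q / pdy u q) p
        = (pdx u p / pdy u p) * pdy (fun q => pdx u q / pdy u q) p := by
  -- main pointwise construction
  have main : ∀ p ∈ U, HasFDerivAt (fun q => pdx u q / pdy u q)
      (pdx u p • ((-((pdy u p) ^ 2)⁻¹) • fderiv ℝ (pdy u) p)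
        + (pdy u p)⁻¹ • fderiv ℝ (pdx u) p) p := by
    intro p hp
    have hat : ContDiffAt ℝ 2 u p := hu.contDiffAt (hU.mem_nhds hp)
    have hX := hasFDerivAt_pd u p hat (1, 0)
    have hY := hasFDerivAt_pd u p hat (0, 1)
    have hX' : HasFDerivAt (pdx u) (fderiv ℝ (pdx u) p) p := by
      have := hX.differentiableAt
      exact this.hasFDerivAt
    have hY' : HasFDerivAt (pdy u) (fderiv ℝ (pdy u) p) p := by
      have := hY.differentiableAt
      exact this.hasFDerivAt
    have hb := huy p hp
    have hinv : HasFDerivAt (fun q => (pdy u q)⁻¹)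
        ((-((pdy u p) ^ 2)⁻¹) • fderiv ℝ (pdy u) p) p :=
      (hasDerivAt_inv hb).comp_hasFDerivAt p hY'
    have hmul := hX'.mul hinv
    have : (fun q => pdx u q / pdy u q) = fun q => pdx u q * (pdy u q)⁻¹ := by
      funext q; rw [div_eq_mul_inv]
    rw [this]
    exact hmul
  constructor
  · intro p hp
    exact ((main p hp).differentiableAt).differentiableWithinAt
  · intro p hp
    have hat : ContDiffAt ℝ 2 u p := hu.contDiffAt (hU.mem_nhds hp)
    have hb := huy p hp
    have hfd := (main p hp).fderiv
    -- symmetry of second derivative: pdx (pdy u) p = pdy (pdx u) p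
    have hsymm : pdx (pdy u) p = pdy (pdx u) p := by
      have hX := (hasFDerivAt_pd u p hat (1, 0)).fderiv
      have hY := (hasFDerivAt_pd u p hat (0, 1)).fderiv
      have hs := hat.isSymmSndFDerivAt (by simp [minSmoothness_of_isRCLikeNormedField]) (1, 0) (0, 1)
      show fderiv ℝ (pdy u) p (1, 0) = fderiv ℝ (pdx u) p (0, 1)
      rw [show pdy u = fun q => fderiv ℝ u q (0, 1) from rfl,
        show pdx u = fun q => fderiv ℝ u q (1, 0) from rfl, hX, hY]
      simpa using hs
    have e1 : pdx (fun q => pdx u q / pdy u q) p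
        = pdx u p * (-((pdy u p) ^ 2)⁻¹ * pdx (pdy u) p)
          + (pdy u p)⁻¹ * pdx (pdx u) p := by
      show fderiv ℝ (fun q => pdx u q / pdy u q) p (1, 0) = _
      rw [hfd]; simp [pdx]
    have e2 : pdy (fun q => pdx u q / pdy u q) p
        = pdx u p * (-((pdy u p) ^ 2)⁻¹ * pdy (pdy u) p)
          + (pdy u p)⁻¹ * pdy (pdx u) p := by
      show fderiv ℝ (fun q => pdx u q / pdy u q) p (0, 1) = _
      rw [hfd]; simp [pdy]
    have hfl := hflux p hp
    rw [e1, e2, hsymm]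
    field_simp
    linear_combination hfl
end

section
/- Let U ⊆ ℝ² be open, let u : ℝ² → ℝ be C² on U, and let Φ : ℝ → ℝ be C². Set v = Φ ∘ u. Then at every point p ∈ U, v_y²·v_xx − 2·v_x·v_y·v_xy + v_x²·v_yy = (Φ'(u(p)))³ · (u_y²·u_xx − 2·u_x·u_y·u_xy + u_x²·u_yy) evaluated at p. In particular, the left-hand side of the flux equation is a relative invariant of the substitution u ↦ Φ(u), and the flux equation is invariant under such substitutions with Φ'∘u nonvanishing. -/
/-- The left-hand side of the flux equation
`u_y²·u_xx − 2·u_x·u_y·u_xy + u_x²·u_yy`. -/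
noncomputable def fluxLHS (u : ℝ × ℝ → ℝ) (p : ℝ × ℝ) : ℝ :=
  (pdy u p) ^ 2 * pdx (pdx u) p
    - 2 * pdx u p * pdy u p * pdy (pdx u) p
    + (pdx u p) ^ 2 * pdy (pdy u) p

lemma fderiv_comp_real' {f : ℝ → ℝ} {u : ℝ × ℝ → ℝ} {p : ℝ × ℝ}
    (hf : DifferentiableAt ℝ f (u p)) (hu : DifferentiableAt ℝ u p) (w : ℝ × ℝ) :
    fderiv ℝ (f ∘ u) p w = deriv f (u p) * fderiv ℝ u p w := by
  rw [fderiv_comp p hf hu]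
  simp only [ContinuousLinearMap.comp_apply]
  rw [show fderiv ℝ u p w = (fderiv ℝ u p w) • (1:ℝ) by simp, map_smul]
  simp [fderiv_apply_one_eq_deriv, mul_comm]

lemma second_deriv_comp {U : Set (ℝ × ℝ)} (hU : IsOpen U) {u : ℝ × ℝ → ℝ}
    (hu : ContDiffOn ℝ 2 u U) {Φ : ℝ → ℝ} (hΦ : ContDiff ℝ 2 Φ)
    {p : ℝ × ℝ} (hp : p ∈ U) (w₁ w₂ : ℝ × ℝ) :
    fderiv ℝ (fun q => fderiv ℝ (Φ ∘ u) q w₂) p w₁ =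
      deriv (deriv Φ) (u p) * fderiv ℝ u p w₁ * fderiv ℝ u p w₂
      + deriv Φ (u p) * fderiv ℝ (fun q => fderiv ℝ u q w₂) p w₁ := by
  have hΦ' : ContDiff ℝ 1 (deriv Φ) :=
    ((contDiff_succ_iff_deriv (n := 1)).mp (by exact_mod_cast hΦ)).2.2
  have hp2 : ContDiffAt ℝ 2 u p := hu.contDiffAt (hU.mem_nhds hp)
  have hud : DifferentiableAt ℝ u p := hp2.differentiableAt (by norm_num)
  -- A = deriv Φ ∘ u is differentiable at p
  have hA : DifferentiableAt ℝ (fun q => deriv Φ (u q)) p :=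
    (hΦ'.differentiable one_ne_zero (u p)).comp p hud
  -- B = q ↦ fderiv u q w₂ is differentiable at p
  have hfd : DifferentiableAt ℝ (fderiv ℝ u) p :=
    (hp2.fderiv_right (m := 1) (by norm_num)).differentiableAt (by norm_num)
  have hB : DifferentiableAt ℝ (fun q => fderiv ℝ u q w₂) p :=
    hfd.clm_apply (differentiableAt_const w₂)
  -- eventually, fderiv (Φ∘u) q w₂ = deriv Φ (u q) * fderiv u q w₂
  have hev : (fun q => fderiv ℝ (Φ ∘ u) q w₂)
      =ᶠ[nhds p] fun q => deriv Φ (u q) * fderiv ℝ u q w₂ := by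
    filter_upwards [hU.mem_nhds hp] with q hq
    have hq2 : ContDiffAt ℝ 2 u q := hu.contDiffAt (hU.mem_nhds hq)
    exact fderiv_comp_real' (hΦ.differentiable (by norm_num) (u q)) 
      (hq2.differentiableAt (by norm_num)) w₂
  rw [hev.fderiv_eq]
  rw [fderiv_fun_mul hA hB]
  simp only [ContinuousLinearMap.add_apply, ContinuousLinearMap.smul_apply, smul_eq_mul]
  have hAfd : fderiv ℝ (fun q => deriv Φ (u q)) p w₁
      = deriv (deriv Φ) (u p) * fderiv ℝ u p w₁ :=
    fderiv_comp_real' (hΦ'.differentiable one_ne_zero (u p)) hud w₁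
  rw [hAfd]
  ring

/-- for `u` C² on an open `U ⊆ ℝ²` and `Φ : ℝ → ℝ` C², setting
`v = Φ ∘ u`, at every `p ∈ U` the flux expression of `v` equals `(Φ'(u(p)))³`
times the flux expression of `u`; in particular the flux expression is a
relative invariant of `u ↦ Φ(u)` and the flux equation is invariant under such
substitutions with `Φ'∘u` nonvanishing on `U`. -/
theorem flux_relative_invariant (U : Set (ℝ × ℝ)) (hU : IsOpen U) (u : ℝ × ℝ → ℝ)
    (hu : ContDiffOn ℝ 2 u U) (Φ : ℝ → ℝ) (hΦ : ContDiff ℝ 2 Φ) :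
    (∀ p ∈ U, fluxLHS (Φ ∘ u) p = (deriv Φ (u p)) ^ 3 * fluxLHS u p) ∧
    ((∀ p ∈ U, deriv Φ (u p) ≠ 0) →
      ((∀ p ∈ U, fluxLHS u p = 0) ↔ (∀ p ∈ U, fluxLHS (Φ ∘ u) p = 0))) := by
  have key : ∀ p ∈ U, fluxLHS (Φ ∘ u) p = (deriv Φ (u p)) ^ 3 * fluxLHS u p := by
    intro p hp
    have hp2 : ContDiffAt ℝ 2 u p := hu.contDiffAt (hU.mem_nhds hp)
    have hud : DifferentiableAt ℝ u p := hp2.differentiableAt (by norm_num)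
    have h1 : ∀ w, fderiv ℝ (Φ ∘ u) p w = deriv Φ (u p) * fderiv ℝ u p w :=
      fun w => fderiv_comp_real' (hΦ.differentiable (by norm_num) (u p)) hud w
    have h2 := second_deriv_comp hU hu hΦ hp
    have pdx_def : ∀ f : ℝ × ℝ → ℝ, pdx f = fun q => fderiv ℝ f q (1, 0) := fun _ => rfl
    have pdy_def : ∀ f : ℝ × ℝ → ℝ, pdy f = fun q => fderiv ℝ f q (0, 1) := fun _ => rfl
    simp only [fluxLHS, pdx_def, pdy_def]
    rw [h1, h1, h2, h2, h2]
    ring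
  refine ⟨key, fun hne => ⟨fun h p hp => by rw [key p hp, h p hp, mul_zero], 
    fun h p hp => ?_⟩⟩
  have := h p hp
  rw [key p hp] at this
  rcases mul_eq_zero.mp this with h' | h'
  · exact absurd (pow_eq_zero_iff (by norm_num) |>.mp h') (hne p hp)
  · exact h'
end

section
/- Let t, p, q ∈ ℝ and suppose c := p·sin t + cos t > 0. Set p' = (p·cos t − sin t)/c and q' = q/c³. Then q'/(1 + p'²)^{3/2} = q/(1 + p²)^{3/2} (real powers). That is, the classical curvature K = y₂/(1+y₁²)^{3/2} is invariant under the lifted rotation action on the branch where c > 0. -/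
/-- the classical curvature `K = y₂/(1+y₁²)^{3/2}` is invariant
under the lifted rotation action `(y₁, y₂) ↦ ((y₁·cos t − sin t)/c, y₂/c³)`,
`c = y₁·sin t + cos t`, on the branch where `c > 0`. -/
theorem curvature_rotation_invariant_on_branch (t p q : ℝ)
    (hc : p * Real.sin t + Real.cos t > 0) :
    (q / (p * Real.sin t + Real.cos t) ^ 3) /
      (1 + ((p * Real.cos t - Real.sin t) / (p * Real.sin t + Real.cos t)) ^ 2)
        ^ ((3 : ℝ) / 2)
      = q / (1 + p ^ 2) ^ ((3 : ℝ) / 2) := by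
  set c := p * Real.sin t + Real.cos t with hcdef
  have hc0 : c ≠ 0 := ne_of_gt hc
  have key : 1 + ((p * Real.cos t - Real.sin t) / c) ^ 2 = (1 + p ^ 2) / c ^ 2 := by
    field_simp
    have h := Real.sin_sq_add_cos_sq t
    ring_nf
    nlinarith [h]
  rw [key]
  have h1 : (0:ℝ) ≤ 1 + p ^ 2 := by positivity
  have h2 : (0:ℝ) < c ^ 2 := by positivity
  rw [Real.div_rpow h1 h2.le]
  have h3 : (c ^ 2 : ℝ) ^ ((3:ℝ)/2) = c ^ 3 := by
    rw [← Real.rpow_natCast c 2, ← Real.rpow_mul hc.le, ← Real.rpow_natCast c 3]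
    norm_num
  rw [h3]
  have h4 : (1 + p ^ 2 : ℝ) ^ ((3:ℝ)/2) ≠ 0 := by positivity
  field_simp
end

section
/- Let I ⊆ ℝ be an open interval and y : ℝ → ℝ be five times continuously differentiable on I with y''(x) > 0 for all x ∈ I. Suppose y satisfies the Monge equation y⁽⁵⁾(x)·y''(x)² − 5·y''(x)·y'''(x)·y⁽⁴⁾(x) + (40/9)·y'''(x)³ = 0 on I. Then the function x ↦ (3·y''(x)·y⁽⁴⁾(x) − 5·y'''(x)²)·(y''(x))^{−8/3} has derivative zero at every point of I, and hence is constant on I. That is, j₁ = (3y₂y₄ − 5y₃²)/y₂^{8/3} is a first integral of the Monge equation. -/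
open Set in
private lemma MongeAux.itD_open {f : ℝ → ℝ} {s : Set ℝ} (hs : IsOpen s) {x : ℝ} (hx : x ∈ s) (n : ℕ) :
    iteratedDerivWithin n f s x = iteratedDeriv n f x := by
  simp [iteratedDerivWithin, iteratedDeriv, iteratedFDerivWithin_of_isOpen n hs hx]

private lemma MongeAux.step {f : ℝ → ℝ} {s : Set ℝ} (hf : ContDiffOn ℝ 5 f s) (hs : IsOpen s)
    {k : ℕ} (hk : k < 5) {x : ℝ} (hx : x ∈ s) :
    HasDerivAt (iteratedDeriv k f) (iteratedDeriv (k + 1) f x) x := by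
  have hd : DifferentiableOn ℝ (iteratedDerivWithin k f s) s :=
    hf.differentiableOn_iteratedDerivWithin (by exact_mod_cast hk) hs.uniqueDiffOn
  have h1 : DifferentiableAt ℝ (iteratedDerivWithin k f s) x :=
    (hd x hx).differentiableAt (hs.mem_nhds hx)
  have heq : iteratedDerivWithin k f s =ᶠ[nhds x] iteratedDeriv k f :=
    Filter.eventuallyEq_of_mem (hs.mem_nhds hx) (fun z hz => MongeAux.itD_open hs hz k)
  have h2 : DifferentiableAt ℝ (iteratedDeriv k f) x := h1.congr_of_eventuallyEq heq.symm
  have := h2.hasDerivAt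
  rwa [iteratedDeriv_succ]


/-- on an open interval where `y` is C⁵ with `y'' > 0` and solves
the Monge equation `y⁽⁵⁾·y''² − 5·y''·y'''·y⁽⁴⁾ + (40/9)·y'''³ = 0`, the
function `j₁ = (3y₂y₄ − 5y₃²)·y₂^{−8/3}` has zero derivative at every point of
the interval and hence is constant on it: `j₁` is a first integral of the
Monge equation. -/
theorem monge_first_integral (a b : ℝ) (y : ℝ → ℝ)
    (hy : ContDiffOn ℝ 5 y (Set.Ioo a b))
    (hpos : ∀ x ∈ Set.Ioo a b, 0 < iteratedDeriv 2 y x)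
    (hmonge : ∀ x ∈ Set.Ioo a b,
      iteratedDeriv 5 y x * (iteratedDeriv 2 y x) ^ 2
        - 5 * iteratedDeriv 2 y x * iteratedDeriv 3 y x * iteratedDeriv 4 y x
        + (40 / 9) * (iteratedDeriv 3 y x) ^ 3 = 0) :
    (∀ x ∈ Set.Ioo a b,
      deriv (fun x =>
        (3 * iteratedDeriv 2 y x * iteratedDeriv 4 y x
            - 5 * (iteratedDeriv 3 y x) ^ 2) *
          (iteratedDeriv 2 y x) ^ (-(8 : ℝ) / 3)) x = 0) ∧
    (∀ x₁ ∈ Set.Ioo a b, ∀ x₂ ∈ Set.Ioo a b,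
      (3 * iteratedDeriv 2 y x₁ * iteratedDeriv 4 y x₁
          - 5 * (iteratedDeriv 3 y x₁) ^ 2) *
        (iteratedDeriv 2 y x₁) ^ (-(8 : ℝ) / 3)
      = (3 * iteratedDeriv 2 y x₂ * iteratedDeriv 4 y x₂
          - 5 * (iteratedDeriv 3 y x₂) ^ 2) *
        (iteratedDeriv 2 y x₂) ^ (-(8 : ℝ) / 3)) := by
  set s := Set.Ioo a b with hs
  set c : ℝ := -(8 : ℝ) / 3 with hc
  set j : ℝ → ℝ := fun x =>
    (3 * iteratedDeriv 2 y x * iteratedDeriv 4 y x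
      - 5 * (iteratedDeriv 3 y x) ^ 2) * (iteratedDeriv 2 y x) ^ c with hj
  have hkey : ∀ x ∈ s, HasDerivAt j 0 x := by
    intro x hx
    have h2 := MongeAux.step hy isOpen_Ioo (by norm_num) hx (k := 2)
    have h3 := MongeAux.step hy isOpen_Ioo (by norm_num) hx (k := 3)
    have h4 := MongeAux.step hy isOpen_Ioo (by norm_num) hx (k := 4)
    set y2 := iteratedDeriv 2 y x
    set y3 := iteratedDeriv 3 y x
    set y4 := iteratedDeriv 4 y x
    set y5 := iteratedDeriv 5 y x
    have hy2 : 0 < y2 := hpos x hx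
    have hne : y2 ≠ 0 := ne_of_gt hy2
    have hu : HasDerivAt (fun x => 3 * iteratedDeriv 2 y x * iteratedDeriv 4 y x
        - 5 * (iteratedDeriv 3 y x) ^ 2)
        ((3 * y3) * y4 + (3 * y2) * y5 - 5 * (2 * y3 ^ 1 * y4)) x := by
      exact (((h2.const_mul 3).mul h4).sub ((h3.pow 2).const_mul 5))
    have hv : HasDerivAt (fun x => (iteratedDeriv 2 y x) ^ c)
        (y3 * c * y2 ^ (c - 1)) x := h2.rpow_const (Or.inl hne)
    have hprod := hu.mul hv
    have hval : ((3 * y3) * y4 + (3 * y2) * y5 - 5 * (2 * y3 ^ 1 * y4)) * y2 ^ c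
        + (3 * y2 * y4 - 5 * y3 ^ 2) * (y3 * c * y2 ^ (c - 1)) = 0 := by
      have hsplit : y2 ^ c = y2 ^ (c - 1) * y2 := by
        rw [← Real.rpow_add_one hne (c - 1)]; ring_nf
      rw [hsplit]
      have hm := hmonge x hx
      have hcv : c = -(8 : ℝ) / 3 := hc
      rw [hcv]
      linear_combination 3 * (y2 ^ (c - 1)) * hm
    rw [hval] at hprod
    exact hprod
  constructor
  · intro x hx
    exact (hkey x hx).deriv
  · intro x₁ hx₁ x₂ hx₂
    have hdiff : DifferentiableOn ℝ j s := fun z hz =>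
      ((hkey z hz).differentiableAt).differentiableWithinAt
    have hfd : ∀ z ∈ s, fderivWithin ℝ j s z = 0 := by
      intro z hz
      rw [fderivWithin_of_isOpen isOpen_Ioo hz, (hkey z hz).hasFDerivAt.fderiv]
      ext; simp
    exact (convex_Ioo a b).is_const_of_fderivWithin_eq_zero hdiff hfd hx₁ hx₂
end

section
/- Let (a,b,c,d,e,f) ∈ ℝ⁶ be a nonzero tuple, let I ⊆ ℝ be an open interval, and let y : ℝ → ℝ be five times continuously differentiable on I satisfying a·x² + 2b·x·y(x) + c·y(x)² + 2d·x + 2e·y(x) + f = 0 for all x ∈ I. Then y satisfies the Monge equation y⁽⁵⁾(x)·y''(x)² − 5·y''(x)·y'''(x)·y⁽⁴⁾(x) + (40/9)·y'''(x)³ = 0 for all x ∈ I. That is, every graph lying on a plane quadric is a solution of the Monge equation. -/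
set_option linter.unusedTactic false
open Set Filter

/-- If a function vanishes on an open set and has a derivative there,
the derivative vanishes on that set. -/
private lemma deriv_zero_of_zero_on {g g' : ℝ → ℝ} {s : Set ℝ} (hs : IsOpen s)
    (hg : ∀ x ∈ s, g x = 0) (hg' : ∀ x ∈ s, HasDerivAt g (g' x) x) :
    ∀ x ∈ s, g' x = 0 := by
  intro x hx
  have hev : g =ᶠ[nhds x] fun _ => (0 : ℝ) :=
    Filter.eventually_of_mem (hs.mem_nhds hx) hg
  have h1 : deriv g x = deriv (fun _ => (0 : ℝ)) x := hev.deriv_eq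
  rw [deriv_const] at h1
  rw [← (hg' x hx).deriv]
  exact h1

private lemma HasDerivAt.congr_d {f : ℝ → ℝ} {d₁ d₂ : ℝ} {x : ℝ}
    (h : HasDerivAt f d₁ x) (hd : d₁ = d₂) : HasDerivAt f d₂ x := hd ▸ h

/-- every graph `y = y(x)` lying on a plane quadric
`a·x² + 2b·x·y + c·y² + 2d·x + 2e·y + f = 0` with nonzero coefficient tuple
`(a,b,c,d,e,f)` is a solution of the Monge equation
`y⁽⁵⁾·y''² − 5·y''·y'''·y⁽⁴⁾ + (40/9)·y'''³ = 0`. -/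
theorem quadric_solves_monge (a b c d e f : ℝ)
    (hcoef : ¬(a = 0 ∧ b = 0 ∧ c = 0 ∧ d = 0 ∧ e = 0 ∧ f = 0))
    (α β : ℝ) (y : ℝ → ℝ) (hy : ContDiffOn ℝ 5 y (Set.Ioo α β))
    (hquad : ∀ x ∈ Set.Ioo α β,
      a * x ^ 2 + 2 * b * x * y x + c * (y x) ^ 2
        + 2 * d * x + 2 * e * y x + f = 0) :
    ∀ x ∈ Set.Ioo α β,
      iteratedDeriv 5 y x * (iteratedDeriv 2 y x) ^ 2
        - 5 * iteratedDeriv 2 y x * iteratedDeriv 3 y x * iteratedDeriv 4 y x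
        + (40 / 9) * (iteratedDeriv 3 y x) ^ 3 = 0 := by
  have hIo : IsOpen (Set.Ioo α β) := isOpen_Ioo
  set p : ℝ → ℝ := deriv y with hpdef
  set q : ℝ → ℝ := deriv p with hqdef
  set r : ℝ → ℝ := deriv q with hrdef
  set s : ℝ → ℝ := deriv r with hsdef
  set t : ℝ → ℝ := deriv s with htdef
  -- smoothness of the successive derivatives
  have hcp : ContDiffOn ℝ 4 p (Set.Ioo α β) := hy.deriv_of_isOpen hIo (by norm_num)
  have hcq : ContDiffOn ℝ 3 q (Set.Ioo α β) := hcp.deriv_of_isOpen hIo (by norm_num)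
  have hcr : ContDiffOn ℝ 2 r (Set.Ioo α β) := hcq.deriv_of_isOpen hIo (by norm_num)
  have hcs : ContDiffOn ℝ 1 s (Set.Ioo α β) := hcr.deriv_of_isOpen hIo (by norm_num)
  have hyd : ∀ x ∈ Set.Ioo α β, HasDerivAt y (p x) x := fun x hx =>
    ((hy.differentiableOn (by norm_num)).differentiableAt (hIo.mem_nhds hx)).hasDerivAt
  have hpd : ∀ x ∈ Set.Ioo α β, HasDerivAt p (q x) x := fun x hx =>
    ((hcp.differentiableOn (by norm_num)).differentiableAt (hIo.mem_nhds hx)).hasDerivAt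
  have hqd : ∀ x ∈ Set.Ioo α β, HasDerivAt q (r x) x := fun x hx =>
    ((hcq.differentiableOn (by norm_num)).differentiableAt (hIo.mem_nhds hx)).hasDerivAt
  have hrd : ∀ x ∈ Set.Ioo α β, HasDerivAt r (s x) x := fun x hx =>
    ((hcr.differentiableOn (by norm_num)).differentiableAt (hIo.mem_nhds hx)).hasDerivAt
  have hsd : ∀ x ∈ Set.Ioo α β, HasDerivAt s (t x) x := fun x hx =>
    ((hcs.differentiableOn (by norm_num)).differentiableAt (hIo.mem_nhds hx)).hasDerivAt
  -- the linear factor B(z) = b z + c y z + e, A(z) = b + c p z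
  have hBd : ∀ x ∈ Set.Ioo α β,
      HasDerivAt (fun z => b * z + c * y z + e) (b + c * p x) x := by
    intro x hx
    exact ((((hasDerivAt_id x).const_mul b).add ((hyd x hx).const_mul c)).add_const e).congr_d
      (by (try simp only [id_eq]); (try push_cast); (try ring))
  have hAd : ∀ x ∈ Set.Ioo α β,
      HasDerivAt (fun z => b + c * p z) (c * q x) x := by
    intro x hx
    exact ((hasDerivAt_const x b).add ((hpd x hx).const_mul c)).congr_d (by (try simp only [id_eq]); (try push_cast); (try ring))
  -- first derivative of the quadric identity
  have hG1 : ∀ x ∈ Set.Ioo α β,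
      2 * (a * x + b * y x + d) + 2 * p x * (b * x + c * y x + e) = 0 := by
    apply deriv_zero_of_zero_on hIo hquad
    intro x hx
    have hY := hyd x hx
    have t1 : HasDerivAt (fun z : ℝ => a * z ^ 2) (a * (2 * x)) x :=
      ((hasDerivAt_pow 2 x).const_mul a).congr_d (by (try simp only [id_eq]); (try push_cast); (try ring))
    have t2 : HasDerivAt (fun z => 2 * b * z * y z) (2 * b * y x + 2 * b * x * p x) x :=
      (((hasDerivAt_id x).const_mul (2 * b)).mul hY).congr_d (by (try simp only [id_eq]); (try push_cast); (try ring))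
    have t3 : HasDerivAt (fun z => c * (y z) ^ 2) (c * (2 * y x * p x)) x :=
      ((hY.pow 2).const_mul c).congr_d (by (try simp only [id_eq]); (try push_cast); (try ring))
    have t4 : HasDerivAt (fun z : ℝ => 2 * d * z) (2 * d) x :=
      ((hasDerivAt_id x).const_mul (2 * d)).congr_d (by (try simp only [id_eq]); (try push_cast); (try ring))
    have t5 : HasDerivAt (fun z => 2 * e * y z) (2 * e * p x) x := hY.const_mul (2 * e)
    exact (((((t1.add t2).add t3).add t4).add t5).add_const f).congr_d (by (try simp only [id_eq]); (try push_cast); (try ring))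
  -- second derivative
  have hG2 : ∀ x ∈ Set.Ioo α β,
      2 * (a + 2 * b * p x + c * (p x) ^ 2) + 2 * q x * (b * x + c * y x + e) = 0 := by
    apply deriv_zero_of_zero_on hIo hG1
    intro x hx
    have hY := hyd x hx
    have hP := hpd x hx
    have u1 : HasDerivAt (fun z => 2 * (a * z + b * y z + d)) (2 * (a + b * p x)) x :=
      (((((hasDerivAt_id x).const_mul a).add (hY.const_mul b)).add_const d).const_mul 2).congr_d
        (by (try simp only [id_eq]); (try push_cast); (try ring))
    have u2 : HasDerivAt (fun z => 2 * p z * (b * z + c * y z + e))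
        (2 * q x * (b * x + c * y x + e) + 2 * p x * (b + c * p x)) x :=
      ((hP.const_mul 2).mul (hBd x hx)).congr_d (by (try simp only [id_eq]); (try push_cast); (try ring))
    exact (u1.add u2).congr_d (by (try simp only [id_eq]); (try push_cast); (try ring))
  -- third derivative
  have hG3 : ∀ x ∈ Set.Ioo α β,
      6 * q x * (b + c * p x) + 2 * r x * (b * x + c * y x + e) = 0 := by
    apply deriv_zero_of_zero_on hIo hG2
    intro x hx
    have hP := hpd x hx
    have hQ := hqd x hx
    have v1 : HasDerivAt (fun z => 2 * (a + 2 * b * p z + c * (p z) ^ 2))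
        (2 * (2 * b * q x + 2 * c * p x * q x)) x :=
      ((((hasDerivAt_const x a).add (hP.const_mul (2 * b))).add
        ((hP.pow 2).const_mul c)).const_mul 2).congr_d (by (try simp only [id_eq]); (try push_cast); (try ring))
    have v2 : HasDerivAt (fun z => 2 * q z * (b * z + c * y z + e))
        (2 * r x * (b * x + c * y x + e) + 2 * q x * (b + c * p x)) x :=
      ((hQ.const_mul 2).mul (hBd x hx)).congr_d (by (try simp only [id_eq]); (try push_cast); (try ring))
    exact (v1.add v2).congr_d (by (try simp only [id_eq]); (try push_cast); (try ring))
  -- fourth derivative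
  have hG4 : ∀ x ∈ Set.Ioo α β,
      8 * r x * (b + c * p x) + 6 * c * (q x) ^ 2
        + 2 * s x * (b * x + c * y x + e) = 0 := by
    apply deriv_zero_of_zero_on hIo hG3
    intro x hx
    have hQ := hqd x hx
    have hR := hrd x hx
    have w1 : HasDerivAt (fun z => 6 * q z * (b + c * p z))
        (6 * r x * (b + c * p x) + 6 * q x * (c * q x)) x :=
      ((hQ.const_mul 6).mul (hAd x hx)).congr_d (by (try simp only [id_eq]); (try push_cast); (try ring))
    have w2 : HasDerivAt (fun z => 2 * r z * (b * z + c * y z + e))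
        (2 * s x * (b * x + c * y x + e) + 2 * r x * (b + c * p x)) x :=
      ((hR.const_mul 2).mul (hBd x hx)).congr_d (by (try simp only [id_eq]); (try push_cast); (try ring))
    exact (w1.add w2).congr_d (by (try simp only [id_eq]); (try push_cast); (try ring))
  -- fifth derivative
  have hG5 : ∀ x ∈ Set.Ioo α β,
      10 * s x * (b + c * p x) + 20 * c * q x * r x
        + 2 * t x * (b * x + c * y x + e) = 0 := by
    apply deriv_zero_of_zero_on hIo hG4
    intro x hx
    have hQ := hqd x hx
    have hR := hrd x hx
    have hS := hsd x hx
    have x1 : HasDerivAt (fun z => 8 * r z * (b + c * p z))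
        (8 * s x * (b + c * p x) + 8 * r x * (c * q x)) x :=
      ((hR.const_mul 8).mul (hAd x hx)).congr_d (by (try simp only [id_eq]); (try push_cast); (try ring))
    have x2 : HasDerivAt (fun z => 6 * c * (q z) ^ 2) (6 * c * (2 * q x * r x)) x :=
      ((hQ.pow 2).const_mul (6 * c)).congr_d (by (try simp only [id_eq]); (try push_cast); (try ring))
    have x3 : HasDerivAt (fun z => 2 * s z * (b * z + c * y z + e))
        (2 * t x * (b * x + c * y x + e) + 2 * s x * (b + c * p x)) x :=
      ((hS.const_mul 2).mul (hBd x hx)).congr_d (by (try simp only [id_eq]); (try push_cast); (try ring))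
    exact ((x1.add x2).add x3).congr_d (by (try simp only [id_eq]); (try push_cast); (try ring))
  -- rewrite the goal in terms of p, q, r, s, t
  have g2d : iteratedDeriv 2 y = q := by
    rw [show (2 : ℕ) = 1 + 1 from rfl, iteratedDeriv_succ, iteratedDeriv_one, ← hpdef, ← hqdef]
  have g3d : iteratedDeriv 3 y = r := by
    rw [show (3 : ℕ) = 2 + 1 from rfl, iteratedDeriv_succ, g2d, ← hrdef]
  have g4d : iteratedDeriv 4 y = s := by
    rw [show (4 : ℕ) = 3 + 1 from rfl, iteratedDeriv_succ, g3d, ← hsdef]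
  have g5d : iteratedDeriv 5 y = t := by
    rw [show (5 : ℕ) = 4 + 1 from rfl, iteratedDeriv_succ, g4d, ← htdef]
  intro x hx
  rw [g2d, g3d, g4d, g5d]
  by_cases hB : b * x + c * y x + e = 0
  · by_cases hA : b + c * p x = 0
    · by_cases hc : c = 0
      · -- degenerate: b = c = e = 0 forces all coefficients to vanish
        exfalso
        subst hc
        have hb : b = 0 := by linarith [hA]
        subst hb
        have he : e = 0 := by linarith [hB]
        subst he
        have ha : a = 0 := by linear_combination (hG2 x hx) / 2
        have hd : d = 0 := by linear_combination (hG1 x hx) / 2 - x * ha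
        have hf : f = 0 := by linear_combination (hquad x hx) - x ^ 2 * ha - 2 * x * hd
        exact hcoef ⟨ha, rfl, rfl, hd, rfl, hf⟩
      · -- degenerate conic: y is affine on the interval
        have hac : a * c - b ^ 2 = 0 := by
          linear_combination (c / 2) * (hG2 x hx) - (b + c * p x) * hA - (c * q x) * hB
        have hcd : c * d - b * e = 0 := by
          linear_combination (c / 2) * (hG1 x hx) - (c * p x + b) * hB - x * hac
        have hcf : c * f - e ^ 2 = 0 := by
          linear_combination c * (hquad x hx) - (b * x + c * y x + e) * hB
            - x ^ 2 * hac - 2 * x * hcd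
        have hlin : ∀ z ∈ Set.Ioo α β, b * z + c * y z + e = 0 := by
          intro z hz
          have hsq : (b * z + c * y z + e) ^ 2 = 0 := by
            linear_combination c * (hquad z hz) - z ^ 2 * hac - 2 * z * hcd - hcf
          exact pow_eq_zero_iff two_ne_zero |>.mp hsq
        have hyz : ∀ z ∈ Set.Ioo α β, y z = (-(b * z) - e) / c := by
          intro z hz
          have h := hlin z hz
          field_simp
          linarith
        have hev : y =ᶠ[nhds x] fun z => (-(b * z) - e) / c :=
          Filter.eventually_of_mem (hIo.mem_nhds hx) hyz
        have hev1 : p =ᶠ[nhds x] fun _ => -b / c := by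
          have h1 := hev.deriv
          have h2 : deriv (fun z : ℝ => (-(b * z) - e) / c) = fun _ => -b / c := by
            funext z
            exact ((((hasDerivAt_id z).const_mul b).neg.sub_const e).div_const c).congr_d
              (by (try simp only [id_eq]); (try push_cast); (try ring)) |>.deriv
          rw [h2] at h1
          exact h1
        have hq0 : q =ᶠ[nhds x] fun _ => (0 : ℝ) := by
          have h1 := hev1.deriv
          have h2 : deriv (fun _ : ℝ => -b / c) = fun _ => (0 : ℝ) := by
            funext z
            exact deriv_const z _
          rw [h2] at h1
          exact h1
        have hQ0 : q x = 0 := hq0.self_of_nhds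
        have hR0 : r x = 0 := by
          have h := hq0.deriv_eq
          rw [deriv_const] at h
          exact h
        rw [hQ0, hR0]
        ring
    · -- B = 0, A ≠ 0 : q x = r x = 0
      have hQ0 : q x = 0 := by
        have h : q x * (b + c * p x) = 0 := by
          linear_combination (hG3 x hx) / 6 - (r x / 3) * hB
        rcases mul_eq_zero.mp h with h | h
        · exact h
        · exact absurd h hA
      have hR0 : r x = 0 := by
        have h : r x * (b + c * p x) = 0 := by
          linear_combination (hG4 x hx) / 8 - (s x / 4) * hB - (3 * c / 4) * q x * hQ0
        rcases mul_eq_zero.mp h with h | h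
        · exact h
        · exact absurd h hA
      rw [hQ0, hR0]
      ring
  · -- B ≠ 0 : eliminate A and c from the 3rd, 4th, 5th derived relations
    have key : (b * x + c * y x + e)
        * (t x * (q x) ^ 2 - 5 * q x * r x * s x + 40 / 9 * (r x) ^ 3) = 0 := by
      linear_combination ((q x) ^ 2 / 2) * (hG5 x hx)
        - (5 / 3 * q x * r x) * (hG4 x hx)
        - (5 / 6 * s x * q x - 20 / 9 * (r x) ^ 2) * (hG3 x hx)
    rcases mul_eq_zero.mp key with h | h
    · exact absurd h hB
    · exact h
end
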